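/- Let K be a commutative ring, and let n ≥ 2 and a ≥ 1 be integers. For 1 ≤ k ≤ n−1 let σ_k be the K-algebra automorphism of the polynomial ring K[X₁,…,X_n] swapping X_k and X_{k+1} (and fixing the other variables), define the K-linear operator T_k by T_k(f) = (X_k^a + X_{k+1}^a)·σ_k(f), and for g ∈ K[X₁,…,X_n] let m_g denote multiplication by g. Then: (i) T_k ∘ T_k = m_{(X_k^a + X_{k+1}^a)²}; (ii) T_k ∘ T_{k+1} ∘ T_k = T_{k+1} ∘ T_k ∘ T_{k+1} for 1 ≤ k ≤ n−2; (iii) T_k ∘ T_l = T_l ∘ T_k for |k − l| ≥ 2; (iv) T_k ∘ m_{X_k} = m_{X_{k+1}} ∘ T_k and T_k ∘ m_{X_{k+1}} = m_{X_k} ∘ T_k; (v) T_k ∘ m_{X_j} = m_{X_j} ∘ T_k for j ∉ {k, k+1}. -/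

import Mathlib

open MvPolynomial

noncomputable section

/-- The adjacent transposition `s_k = (k, k+1)` (0-indexed), as a permutation
of `Fin n` (junk value `1` if out of range). -/
def adjSwap (n k : ℕ) : Equiv.Perm (Fin n) :=
  if h : k + 1 < n then Equiv.swap ⟨k, Nat.lt_of_succ_lt h⟩ ⟨k + 1, h⟩ else 1

/-- The operator `T_k (f) = (X_k ^ a + X_{k+1} ^ a) ⬝ σ_k (f)` on the polynomial
ring `K[X₁, …, X_n]`, where `σ_k` swaps the variables `X_k` and `X_{k+1}`
(identity as junk value if `k` is out of range). -/
def Tk (K : Type*) [CommRing K] (n a k : ℕ) :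
    MvPolynomial (Fin n) K → MvPolynomial (Fin n) K := fun f =>
  if h : k + 1 < n then
    (X (⟨k, Nat.lt_of_succ_lt h⟩ : Fin n) ^ a + X (⟨k + 1, h⟩ : Fin n) ^ a) *
      rename (adjSwap n k) f
  else f

lemma Tk_apply (K : Type*) [CommRing K] (n a k : ℕ) (h : k + 1 < n)
    (f : MvPolynomial (Fin n) K) :
    Tk K n a k f = (X (⟨k, Nat.lt_of_succ_lt h⟩ : Fin n) ^ a + X (⟨k + 1, h⟩ : Fin n) ^ a) *
      rename (Equiv.swap (⟨k, Nat.lt_of_succ_lt h⟩ : Fin n) ⟨k + 1, h⟩) f := by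
  simp [Tk, adjSwap, h]

lemma rename_mul_factor {K : Type*} [CommRing K] {n a : ℕ} (σ : Equiv.Perm (Fin n))
    (i j : Fin n) (g : MvPolynomial (Fin n) K) :
    rename σ ((X i ^ a + X j ^ a) * g) = (X (σ i) ^ a + X (σ j) ^ a) * rename σ g := by
  simp [map_mul, map_add, map_pow, rename_X]

lemma rename_mul_X {K : Type*} [CommRing K] {n : ℕ} (σ : Equiv.Perm (Fin n))
    (i : Fin n) (g : MvPolynomial (Fin n) K) :
    rename σ (X i * g) = X (σ i) * rename σ g := by
  simp [map_mul, rename_X]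

lemma swap_swap_self {α : Type*} [DecidableEq α] (i j : α) :
    ⇑(Equiv.swap i j) ∘ ⇑(Equiv.swap i j) = id := by
  funext x; simp

lemma swap_disjoint_comm (n k l : ℕ) (hk : k + 1 < n) (hl : l + 1 < n)
    (h : k + 2 ≤ l ∨ l + 2 ≤ k) :
    ⇑(Equiv.swap (⟨k, Nat.lt_of_succ_lt hk⟩ : Fin n) ⟨k + 1, hk⟩) ∘
      ⇑(Equiv.swap (⟨l, Nat.lt_of_succ_lt hl⟩ : Fin n) ⟨l + 1, hl⟩) =
    ⇑(Equiv.swap (⟨l, Nat.lt_of_succ_lt hl⟩ : Fin n) ⟨l + 1, hl⟩) ∘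
      ⇑(Equiv.swap (⟨k, Nat.lt_of_succ_lt hk⟩ : Fin n) ⟨k + 1, hk⟩) := by
  funext x
  simp only [Function.comp_apply, Equiv.swap_apply_def]
  split_ifs <;> first | rfl | (simp only [Fin.ext_iff, Fin.val_mk] at *; omega)

lemma swap_braid {α : Type*} [DecidableEq α] {i j l : α}
    (hij : i ≠ j) (hil : i ≠ l) (hjl : j ≠ l) :
    ⇑(Equiv.swap i j) ∘ ⇑(Equiv.swap j l) ∘ ⇑(Equiv.swap i j)
      = ⇑(Equiv.swap j l) ∘ ⇑(Equiv.swap i j) ∘ ⇑(Equiv.swap j l) := by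
  have h1 := Equiv.swap_mul_swap_mul_swap (x := l) (y := j) (z := i) hjl.symm hil.symm
  have h2 := Equiv.swap_mul_swap_mul_swap (x := i) (y := j) (z := l) hij hil
  have key : Equiv.swap i j * Equiv.swap j l * Equiv.swap i j
      = Equiv.swap j l * Equiv.swap i j * Equiv.swap j l := by
    rw [h2, Equiv.swap_comm i j, Equiv.swap_comm j l, h1, Equiv.swap_comm]
  funext x
  have := DFunLike.congr_fun key x
  simpa [Equiv.Perm.mul_apply] using this


/-- the operators `T_k` (together with multiplication by the
variables) satisfy the defining relations of the quiver Hecke algebra `𝒮R(ni)`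
attached to an imaginary non-isotropic index `i` with `a = -a_{ii}/2 ≥ 1`
(Section 4.1 of the paper): (i) `T_k² = m_{(X_k^a + X_{k+1}^a)²}`;
(ii) the braid relations; (iii) distant `T`'s commute; (iv) `T_k` exchanges
multiplication by `X_k` and by `X_{k+1}`; (v) `T_k` commutes with
multiplication by `X_j` for `j ∉ {k, k+1}`. This verifies that `𝒮P_ν` is a
module over `𝒮R(ν)` for a single imaginary non-isotropic colour. -/
theorem stmt13 (K : Type*) [CommRing K] (n a : ℕ) (hn : 2 ≤ n) (ha : 1 ≤ a) :
    (∀ k (hk : k + 1 < n), ∀ f : MvPolynomial (Fin n) K,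
      Tk K n a k (Tk K n a k f) =
        (X (⟨k, Nat.lt_of_succ_lt hk⟩ : Fin n) ^ a + X (⟨k + 1, hk⟩ : Fin n) ^ a) ^ 2 * f) ∧
    (∀ k, k + 2 < n → ∀ f : MvPolynomial (Fin n) K,
      Tk K n a k (Tk K n a (k + 1) (Tk K n a k f)) =
        Tk K n a (k + 1) (Tk K n a k (Tk K n a (k + 1) f))) ∧
    (∀ k l, k + 1 < n → l + 1 < n → (k + 2 ≤ l ∨ l + 2 ≤ k) →
      ∀ f : MvPolynomial (Fin n) K,
        Tk K n a k (Tk K n a l f) = Tk K n a l (Tk K n a k f)) ∧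
    (∀ k (hk : k + 1 < n), ∀ f : MvPolynomial (Fin n) K,
      Tk K n a k (X (⟨k, Nat.lt_of_succ_lt hk⟩ : Fin n) * f) =
          X (⟨k + 1, hk⟩ : Fin n) * Tk K n a k f ∧
      Tk K n a k (X (⟨k + 1, hk⟩ : Fin n) * f) =
          X (⟨k, Nat.lt_of_succ_lt hk⟩ : Fin n) * Tk K n a k f) ∧
    (∀ k, k + 1 < n → ∀ j (hj : j < n), j ≠ k → j ≠ k + 1 →
      ∀ f : MvPolynomial (Fin n) K,
        Tk K n a k (X (⟨j, hj⟩ : Fin n) * f) = X (⟨j, hj⟩ : Fin n) * Tk K n a k f) := by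
  refine ⟨?_, ?_, ?_, ?_, ?_⟩
  · -- (i)
    intro k hk f
    rw [Tk_apply K n a k hk, Tk_apply K n a k hk, rename_mul_factor,
      Equiv.swap_apply_left, Equiv.swap_apply_right, rename_rename, swap_swap_self, rename_id, AlgHom.id_apply]
    ring
  · -- (ii) braid
    intro k hk2 f
    have hk : k + 1 < n := Nat.lt_of_succ_lt hk2
    have hk1 : (k + 1) + 1 < n := hk2
    rw [Tk_apply K n a k hk f, Tk_apply K n a (k + 1) hk1, Tk_apply K n a k hk,
      Tk_apply K n a (k + 1) hk1 f, Tk_apply K n a k hk, Tk_apply K n a (k + 1) hk1]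
    simp only [rename_mul_factor, rename_rename]
    have e1 : Equiv.swap (⟨k, Nat.lt_of_succ_lt hk⟩ : Fin n) ⟨k + 1, hk⟩
        (⟨k + 2, hk2⟩ : Fin n) = ⟨k + 2, hk2⟩ :=
      Equiv.swap_apply_of_ne_of_ne (by simp only [ne_eq, Fin.mk.injEq]; omega) (by simp only [ne_eq, Fin.mk.injEq]; omega)
    have e2 : Equiv.swap (⟨k + 1, Nat.lt_of_succ_lt hk1⟩ : Fin n) ⟨k + 2, hk2⟩
        (⟨k, Nat.lt_of_succ_lt hk⟩ : Fin n) = ⟨k, Nat.lt_of_succ_lt hk⟩ :=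
      Equiv.swap_apply_of_ne_of_ne (by simp only [ne_eq, Fin.mk.injEq]; omega) (by simp only [ne_eq, Fin.mk.injEq]; omega)
    have hb := swap_braid (i := (⟨k, Nat.lt_of_succ_lt hk⟩ : Fin n)) (j := ⟨k + 1, hk⟩)
      (l := ⟨k + 2, hk2⟩) (by simp only [ne_eq, Fin.mk.injEq]; omega)
      (by simp only [ne_eq, Fin.mk.injEq]; omega) (by simp only [ne_eq, Fin.mk.injEq]; omega)
    simp only [Equiv.swap_apply_left, Equiv.swap_apply_right, e1, e2]
    rw [show (⇑(Equiv.swap (⟨k, Nat.lt_of_succ_lt hk⟩ : Fin n) ⟨k + 1, hk⟩) ∘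
        ⇑(Equiv.swap (⟨k + 1, Nat.lt_of_succ_lt hk1⟩ : Fin n) ⟨k + 2, hk2⟩) ∘
        ⇑(Equiv.swap (⟨k, Nat.lt_of_succ_lt hk⟩ : Fin n) ⟨k + 1, hk⟩)) =
        (⇑(Equiv.swap (⟨k + 1, Nat.lt_of_succ_lt hk1⟩ : Fin n) ⟨k + 2, hk2⟩) ∘
        ⇑(Equiv.swap (⟨k, Nat.lt_of_succ_lt hk⟩ : Fin n) ⟨k + 1, hk⟩) ∘
        ⇑(Equiv.swap (⟨k + 1, Nat.lt_of_succ_lt hk1⟩ : Fin n) ⟨k + 2, hk2⟩)) from hb]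
    ring
  · -- (iii) distant
    intro k l hk hl hd f
    rw [Tk_apply K n a l hl f, Tk_apply K n a k hk, Tk_apply K n a k hk f,
      Tk_apply K n a l hl, rename_mul_factor, rename_mul_factor, rename_rename, rename_rename]
    have hkl : k ≠ l := by omega
    have e1 : Equiv.swap (⟨k, Nat.lt_of_succ_lt hk⟩ : Fin n) ⟨k + 1, hk⟩
        (⟨l, Nat.lt_of_succ_lt hl⟩ : Fin n) = ⟨l, Nat.lt_of_succ_lt hl⟩ :=
      Equiv.swap_apply_of_ne_of_ne (by simp only [ne_eq, Fin.mk.injEq]; omega) (by simp only [ne_eq, Fin.mk.injEq]; omega)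
    have e2 : Equiv.swap (⟨k, Nat.lt_of_succ_lt hk⟩ : Fin n) ⟨k + 1, hk⟩
        (⟨l + 1, hl⟩ : Fin n) = ⟨l + 1, hl⟩ :=
      Equiv.swap_apply_of_ne_of_ne (by simp only [ne_eq, Fin.mk.injEq]; omega) (by simp only [ne_eq, Fin.mk.injEq]; omega)
    have e3 : Equiv.swap (⟨l, Nat.lt_of_succ_lt hl⟩ : Fin n) ⟨l + 1, hl⟩
        (⟨k, Nat.lt_of_succ_lt hk⟩ : Fin n) = ⟨k, Nat.lt_of_succ_lt hk⟩ :=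
      Equiv.swap_apply_of_ne_of_ne (by simp only [ne_eq, Fin.mk.injEq]; omega) (by simp only [ne_eq, Fin.mk.injEq]; omega)
    have e4 : Equiv.swap (⟨l, Nat.lt_of_succ_lt hl⟩ : Fin n) ⟨l + 1, hl⟩
        (⟨k + 1, hk⟩ : Fin n) = ⟨k + 1, hk⟩ :=
      Equiv.swap_apply_of_ne_of_ne (by simp only [ne_eq, Fin.mk.injEq]; omega) (by simp only [ne_eq, Fin.mk.injEq]; omega)
    rw [e1, e2, e3, e4, swap_disjoint_comm n k l hk hl hd]
    ring
  · -- (iv)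
    intro k hk f
    constructor
    · rw [Tk_apply K n a k hk, Tk_apply K n a k hk f, rename_mul_X, Equiv.swap_apply_left]
      ring
    · rw [Tk_apply K n a k hk, Tk_apply K n a k hk f, rename_mul_X, Equiv.swap_apply_right]
      ring
  · -- (v)
    intro k hk j hj hjk hjk1 f
    rw [Tk_apply K n a k hk, Tk_apply K n a k hk f, rename_mul_X,
      Equiv.swap_apply_of_ne_of_ne (by simp only [ne_eq, Fin.mk.injEq]; omega) (by simp only [ne_eq, Fin.mk.injEq]; omega)]
    ring
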